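/- Let (Σ,g) be a 2-dimensional Riemannian manifold and u a smooth function on Σ. Define the symmetric tensor S_{ij} = R_{ij} - 2∂_i u ∂_j u and its trace S = R - 2|∇u|²_g, where R is the scalar curvature. Suppose the Ricci tensor satisfies Ric_g ≤ ε du⊗du (as quadratic forms) with ε ≤ 4(1-α)/(1-2α) for some α > 1/2. Then the tensor T_{ij} = S_{ij} - α S g_{ij} is nonnegative as a quadratic form, i.e., T_{ij}V^iV^j ≥ 0 for every tangent vector V. -/

import Mathlib

/-- Pointwise statement on a surface `Σ`. At a point, the tangent space is a
2-dimensional real inner product space `V`; on a surface `Ric = (R/2)g`, so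
the Ricci quadratic form is `v ↦ (R/2)‖v‖²`, while `du⊗du` is `v ↦ ⟨w,v⟩²`
with `w = ∇u`. The tensor `S_{ij} = R_{ij} - 2∂_iu∂_ju` has trace
`S = R - 2‖w‖²`. If `Ric ≤ ε du⊗du` as quadratic forms, with
`ε ≤ 4(1-α)/(1-2α)` and `α > 1/2`, then `T = S_{ij} - α S g_{ij}` is a
nonnegative quadratic form. -/
theorem stmt6 {V : Type*} [NormedAddCommGroup V] [InnerProductSpace ℝ V]
    (hdim : Module.finrank ℝ V = 2) (R ε α : ℝ) (w : V)
    (hα : 1 / 2 < α) (hε : ε ≤ 4 * (1 - α) / (1 - 2 * α))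
    (hRic : ∀ v : V, (R / 2) * ‖v‖ ^ 2 ≤ ε * (inner ℝ w v : ℝ) ^ 2) :
    ∀ v : V,
      0 ≤ ((R / 2) * ‖v‖ ^ 2 - 2 * (inner ℝ w v : ℝ) ^ 2) -
          α * (R - 2 * ‖w‖ ^ 2) * ‖v‖ ^ 2 := by
  have hfd : FiniteDimensional ℝ V := FiniteDimensional.of_finrank_eq_succ hdim
  -- find a nonzero vector orthogonal to w
  obtain ⟨v0, hv0mem, hv0ne⟩ : ∃ v0 : V, v0 ∈ (ℝ ∙ w)ᗮ ∧ v0 ≠ 0 := by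
    apply Submodule.exists_mem_ne_zero_of_ne_bot
    intro hbot
    have h1 : Module.finrank ℝ (ℝ ∙ w) + Module.finrank ℝ (ℝ ∙ w)ᗮ = Module.finrank ℝ V :=
      Submodule.finrank_add_finrank_orthogonal _
    have h2 : Module.finrank ℝ (ℝ ∙ w)ᗮ = 0 := by rw [hbot]; simp
    have h3 : Module.finrank ℝ (ℝ ∙ w) ≤ 1 :=
      (finrank_span_le_card ({w} : Set V)).trans (by simp)
    omega
  have hv0 : (inner ℝ w v0 : ℝ) = 0 :=
    hv0mem w (Submodule.mem_span_singleton_self w)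
  -- hence R ≤ 0
  have hR : R ≤ 0 := by
    have := hRic v0
    rw [hv0] at this
    have hn : (0:ℝ) < ‖v0‖ := norm_pos_iff.mpr hv0ne
    nlinarith [this, hn, sq_nonneg ‖v0‖, mul_pos hn hn]
  -- hRic at w : R/2 * ‖w‖² ≤ ε * ‖w‖⁴
  have hw : R / 2 * ‖w‖ ^ 2 ≤ ε * (‖w‖ ^ 2) ^ 2 := by
    have := hRic w
    rwa [real_inner_self_eq_norm_sq] at this
  -- from hε : (1 - 2α) ε ≥ 4 (1 - α)
  have hε' : 4 * (1 - α) ≤ (1 - 2 * α) * ε := by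
    have h12 : 1 - 2 * α < 0 := by linarith
    rw [le_div_iff_of_neg h12] at hε
    linarith [hε]
  -- the key coefficient is nonnegative
  have hC : 0 ≤ (1 / 2 - α) * R + (2 * α - 2) * ‖w‖ ^ 2 := by
    rcases le_or_gt 1 α with h1 | h1
    · have : 0 ≤ (1 / 2 - α) * R := by nlinarith [hR, hα]
      nlinarith [sq_nonneg ‖w‖]
    · rcases eq_or_ne w 0 with hw0 | hw0
      · subst hw0
        simp only [norm_zero]
        nlinarith
      · have hwpos : (0:ℝ) < ‖w‖ ^ 2 := by
          have := norm_pos_iff.mpr hw0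
          positivity
        -- (1/2 - α) * (R * ‖w‖²) ≥ (1-2α) ε ‖w‖⁴ ≥ 4(1-α)‖w‖⁴
        have key : (2 - 2 * α) * (‖w‖ ^ 2) ^ 2 ≤ ((1 / 2 - α) * R + (2 * α - 2) * ‖w‖ ^ 2) * ‖w‖ ^ 2 := by
          nlinarith [mul_le_mul_of_nonpos_left hw (by linarith : (1/2 - α) ≤ 0),
            mul_le_mul_of_nonneg_right hε' (sq_nonneg ‖w‖ : (0:ℝ) ≤ ‖w‖^2)]
        nlinarith [sq_nonneg ‖w‖, key]
  intro v
  have hCS : (inner ℝ w v : ℝ) ^ 2 ≤ ‖w‖ ^ 2 * ‖v‖ ^ 2 := by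
    have h := abs_real_inner_le_norm w v
    have h2 : |(inner ℝ w v : ℝ)| ^ 2 ≤ (‖w‖ * ‖v‖) ^ 2 :=
      pow_le_pow_left₀ (abs_nonneg _) h 2
    rw [sq_abs] at h2
    nlinarith
  nlinarith [mul_nonneg hC (sq_nonneg ‖v‖)]
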